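/- Let T > k ≥ 1 be integers. Let V̂_ε be a T×T diagonal matrix with positive diagonal entries and V̂_y a T×T real symmetric matrix. Let 1+γ̂_1 ≥ 1+γ̂_2 ≥ ... ≥ 1+γ̂_T be the eigenvalues (counted with multiplicity) of the symmetric matrix A := V̂_ε^{-1/2} V̂_y V̂_ε^{-1/2}, assume γ̂_j > 0 for j = 1,...,k, and let Û be a T×k matrix whose columns û_1,...,û_k are orthonormal eigenvectors of A with A û_j = (1+γ̂_j) û_j. Set Γ̂ = diag(γ̂_1,...,γ̂_k), F̂ = V̂_ε^{1/2} Û Γ̂^{1/2}, and Ŝ = V̂_ε^{-1/2} M_{F̂,V̂_ε} (V̂_y − V̂_ε) M_{F̂,V̂_ε}' V̂_ε^{-1/2}. Then Ŝ is symmetric and its multiset of eigenvalues (with multiplicity) equals {γ̂_{k+1}, ..., γ̂_T} together with the value 0 counted k times. -/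

import Mathlib

open Matrix Polynomial

noncomputable section

private lemma eval_charpoly_aux {n : ℕ} (M : Matrix (Fin n) (Fin n) ℝ) (r : ℝ) :
    M.charpoly.eval r = (Matrix.diagonal (fun _ => r) - M).det := by
  have h := RingHom.map_det (Polynomial.evalRingHom r) (Matrix.charmatrix M)
  rw [Matrix.charpoly]
  rw [show Polynomial.eval r (Matrix.charmatrix M).det
      = (Polynomial.evalRingHom r) (Matrix.charmatrix M).det from rfl, h]
  congr 1
  ext i j
  by_cases hij : i = j
  · subst hij
    simp [Matrix.charmatrix_apply_eq]
  · simp [Matrix.charmatrix_apply_ne _ _ _ hij, Matrix.diagonal_apply_ne _ hij]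

private lemma diag_congr {n : ℕ} {f g : Fin n → ℝ} (h : ∀ i, f i = g i) :
    Matrix.diagonal f = Matrix.diagonal g := by rw [funext h]

private lemma prod_filter_lt_aux {T k : ℕ} (hkT : k ≤ T) (f : Fin T → ℝ) :
    ∏ j ∈ Finset.univ.filter (fun j : Fin T => (j : ℕ) < k), f j
      = ∏ j : Fin k, f (Fin.castLE hkT j) := by
  refine Finset.prod_bij' (fun a ha => (⟨(a : ℕ), (Finset.mem_filter.mp ha).2⟩ : Fin k))
    (fun b _ => Fin.castLE hkT b) (fun a ha => Finset.mem_univ _) ?_ ?_ ?_ ?_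
  · intro b hb; simp [b.isLt]
  · intro a ha; ext; simp
  · intro b hb; ext; simp
  · intro a ha; congr 1

theorem statement0 (T k : ℕ) (hk : 1 ≤ k) (hkT : k < T)
    (d : Fin T → ℝ) (hd : ∀ t, 0 < d t)
    (Vy : Matrix (Fin T) (Fin T) ℝ) (hVy : Vyᵀ = Vy)
    (γ : Fin T → ℝ) (hγ : Antitone γ)
    (hγpos : ∀ j : Fin T, (j : ℕ) < k → 0 < γ j)
    (A : Matrix (Fin T) (Fin T) ℝ)
    (hA : A = (Matrix.diagonal fun t => (Real.sqrt (d t))⁻¹) * Vy *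
        (Matrix.diagonal fun t => (Real.sqrt (d t))⁻¹))
    (heig : A.charpoly = ∏ j : Fin T, (X - C (1 + γ j)))
    (U : Matrix (Fin T) (Fin k) ℝ)
    (hUorth : Uᵀ * U = 1)
    (hUeig : ∀ j : Fin k,
        A.mulVec (fun t => U t j) = (1 + γ (Fin.castLE hkT.le j)) • (fun t => U t j))
    (F : Matrix (Fin T) (Fin k) ℝ)
    (hF : F = (Matrix.diagonal fun t => Real.sqrt (d t)) * U *
        Matrix.diagonal (fun j : Fin k => Real.sqrt (γ (Fin.castLE hkT.le j))))
    (M : Matrix (Fin T) (Fin T) ℝ)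
    (hM : M = 1 - F * (Fᵀ * (Matrix.diagonal d)⁻¹ * F)⁻¹ * Fᵀ * (Matrix.diagonal d)⁻¹)
    (S : Matrix (Fin T) (Fin T) ℝ)
    (hS : S = (Matrix.diagonal fun t => (Real.sqrt (d t))⁻¹) * M *
        (Vy - Matrix.diagonal d) * Mᵀ * (Matrix.diagonal fun t => (Real.sqrt (d t))⁻¹)) :
    Sᵀ = S ∧
      S.charpoly =
        X ^ k *
          ∏ j ∈ Finset.univ.filter (fun j : Fin T => k ≤ (j : ℕ)), (X - C (γ j)) := by
  -- basic notation
  set Dh : Matrix (Fin T) (Fin T) ℝ := Matrix.diagonal fun t => Real.sqrt (d t) with hDhdef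
  set Dhi : Matrix (Fin T) (Fin T) ℝ := Matrix.diagonal fun t => (Real.sqrt (d t))⁻¹ with hDhidef
  set G : Matrix (Fin k) (Fin k) ℝ :=
    Matrix.diagonal (fun j : Fin k => Real.sqrt (γ (Fin.castLE hkT.le j))) with hGdef
  set Γk : Matrix (Fin k) (Fin k) ℝ :=
    Matrix.diagonal (fun j : Fin k => γ (Fin.castLE hkT.le j)) with hΓkdef
  have hsd : ∀ t, Real.sqrt (d t) ≠ 0 := fun t => (Real.sqrt_pos.mpr (hd t)).ne'
  have hγk : ∀ j : Fin k, 0 < γ (Fin.castLE hkT.le j) := by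
    intro j
    exact hγpos _ (by simp [j.isLt])
  have hDht : Dhᵀ = Dh := by rw [hDhdef, Matrix.diagonal_transpose]
  have hDhit : Dhiᵀ = Dhi := by rw [hDhidef, Matrix.diagonal_transpose]
  have hGt : Gᵀ = G := by rw [hGdef, Matrix.diagonal_transpose]
  have hΓkt : Γkᵀ = Γk := by rw [hΓkdef, Matrix.diagonal_transpose]
  -- diagonal cancellation facts
  have hDhDhi : Dh * Dhi = 1 := by
    rw [hDhdef, hDhidef, Matrix.diagonal_mul_diagonal,
      diag_congr (n := T) (fun t => mul_inv_cancel₀ (hsd t)), Matrix.diagonal_one]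
  have hDhiDh : Dhi * Dh = 1 := by
    rw [hDhdef, hDhidef, Matrix.diagonal_mul_diagonal,
      diag_congr (n := T) (fun t => inv_mul_cancel₀ (hsd t)), Matrix.diagonal_one]
  have hDinv : (Matrix.diagonal d)⁻¹ = Dhi * Dhi := by
    rw [hDhidef, Matrix.diagonal_mul_diagonal]
    apply Matrix.inv_eq_right_inv
    rw [Matrix.diagonal_mul_diagonal]
    rw [diag_congr (n := T) (g := fun _ => (1:ℝ)) (fun t => by
      rw [← mul_inv, Real.mul_self_sqrt (hd t).le, mul_inv_cancel₀ (hd t).ne']),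
      Matrix.diagonal_one]
  have hDhiDDhi : Dhi * Matrix.diagonal d * Dhi = 1 := by
    rw [hDhidef, Matrix.diagonal_mul_diagonal, Matrix.diagonal_mul_diagonal]
    rw [diag_congr (n := T) (g := fun _ => (1:ℝ)) (fun t => by
      have h2 : Real.sqrt (d t) * Real.sqrt (d t) = d t := Real.mul_self_sqrt (hd t).le
      rw [← h2]
      field_simp
      rw [Real.sqrt_sq (Real.sqrt_nonneg _)]
      exact div_self (pow_ne_zero 2 (hsd t))), Matrix.diagonal_one]
  -- eigenvector equation in matrix form
  have hAU : A * U = U * Matrix.diagonal (fun j : Fin k => 1 + γ (Fin.castLE hkT.le j)) := by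
    ext t j
    have h := congrFun (hUeig j) t
    simp only [Matrix.mulVec, dotProduct, Pi.smul_apply, smul_eq_mul] at h
    rw [Matrix.mul_apply, Matrix.mul_diagonal]
    rw [show ∑ s, A t s * U s j = (1 + γ (Fin.castLE hkT.le j)) * U t j from h]
    ring
  -- compute Fᵀ D⁻¹ F = Γk
  have hFt : Fᵀ = G * (Uᵀ * Dh) := by
    rw [hF]
    simp [Matrix.transpose_mul, hGt, hDht, Matrix.mul_assoc]
  have cUU : ∀ X : Matrix (Fin k) (Fin k) ℝ, Uᵀ * (U * X) = X := by
    intro X; rw [← Matrix.mul_assoc, hUorth, Matrix.one_mul]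
  have hGG : G * G = Γk := by
    rw [hGdef, hΓkdef, Matrix.diagonal_mul_diagonal,
      diag_congr (n := k) (fun j => Real.mul_self_sqrt (hγk j).le)]
  have hFDF : Fᵀ * (Matrix.diagonal d)⁻¹ * F = Γk := by
    rw [hFt, hF, hDinv]
    calc G * (Uᵀ * Dh) * (Dhi * Dhi) * (Dh * U * G)
        = G * (Uᵀ * ((Dh * Dhi) * ((Dhi * Dh) * (U * G)))) := by
          simp only [Matrix.mul_assoc]
      _ = G * (Uᵀ * (U * G)) := by rw [hDhDhi, hDhiDh, Matrix.one_mul, Matrix.one_mul]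
      _ = Γk := by rw [cUU, hGG]
  have hΓkinv : Γk⁻¹ = Matrix.diagonal (fun j : Fin k => (γ (Fin.castLE hkT.le j))⁻¹) := by
    apply Matrix.inv_eq_right_inv
    rw [hΓkdef, Matrix.diagonal_mul_diagonal,
      diag_congr (n := k) (fun j => mul_inv_cancel₀ (hγk j).ne'), Matrix.diagonal_one]
  -- M = 1 - Dh Q Dhi with Q = U Uᵀ
  set Q : Matrix (Fin T) (Fin T) ℝ := U * Uᵀ with hQdef
  have hGΓG : G * (Γk⁻¹ * G) = 1 := by
    rw [hΓkinv, hGdef, Matrix.diagonal_mul_diagonal, Matrix.diagonal_mul_diagonal]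
    rw [diag_congr (n := k) (g := fun _ => (1:ℝ)) (fun j => by
      have h3 := hγk j
      rw [show Real.sqrt (γ (Fin.castLE hkT.le j)) * ((γ (Fin.castLE hkT.le j))⁻¹ *
          Real.sqrt (γ (Fin.castLE hkT.le j)))
        = (Real.sqrt (γ (Fin.castLE hkT.le j)) * Real.sqrt (γ (Fin.castLE hkT.le j))) *
          (γ (Fin.castLE hkT.le j))⁻¹ by ring, Real.mul_self_sqrt h3.le,
        mul_inv_cancel₀ h3.ne']), Matrix.diagonal_one]
  have hM' : M = 1 - Dh * Q * Dhi := by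
    rw [hM, hFDF, hFt, hF, hDinv, hQdef]
    congr 1
    calc Dh * U * G * Γk⁻¹ * (G * (Uᵀ * Dh)) * (Dhi * Dhi)
        = Dh * (U * ((G * (Γk⁻¹ * G)) * (Uᵀ * ((Dh * Dhi) * Dhi)))) := by
          simp only [Matrix.mul_assoc]
      _ = Dh * (U * (Uᵀ * Dhi)) := by
          rw [hGΓG, hDhDhi, Matrix.one_mul, Matrix.one_mul]
      _ = Dh * (U * Uᵀ) * Dhi := by simp only [Matrix.mul_assoc]
  -- S = P (A-1) P with P = 1 - Q
  set P : Matrix (Fin T) (Fin T) ℝ := 1 - Q with hPdef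
  have hQsym : Qᵀ = Q := by rw [hQdef, Matrix.transpose_mul, Matrix.transpose_transpose]
  have hDhiM : Dhi * M = P * Dhi := by
    rw [hM', hPdef, Matrix.mul_sub, Matrix.mul_one, Matrix.sub_mul, Matrix.one_mul]
    congr 1
    calc Dhi * (Dh * Q * Dhi) = (Dhi * Dh) * (Q * Dhi) := by simp only [Matrix.mul_assoc]
      _ = Q * Dhi := by rw [hDhiDh, Matrix.one_mul]
  have hMt : Mᵀ = 1 - Dhi * Q * Dh := by
    rw [hM']
    simp [Matrix.transpose_sub, Matrix.transpose_mul, hDht, hDhit, hQsym, Matrix.mul_assoc]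
  have hMtDhi : Mᵀ * Dhi = Dhi * P := by
    rw [hMt, hPdef, Matrix.sub_mul, Matrix.one_mul, Matrix.mul_sub, Matrix.mul_one]
    congr 1
    calc Dhi * Q * Dh * Dhi = Dhi * Q * (Dh * Dhi) := by simp only [Matrix.mul_assoc]
      _ = Dhi * Q := by rw [hDhDhi, Matrix.mul_one]
  have hmid : Dhi * (Vy - Matrix.diagonal d) * Dhi = A - 1 := by
    rw [Matrix.mul_sub, Matrix.sub_mul, hA, hDhiDDhi]
  have hS2 : S = P * (A - 1) * P := by
    rw [hS]
    calc Dhi * M * (Vy - Matrix.diagonal d) * Mᵀ * Dhi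
        = (Dhi * M) * (Vy - Matrix.diagonal d) * (Mᵀ * Dhi) := by
          simp only [Matrix.mul_assoc]
      _ = P * (Dhi * (Vy - Matrix.diagonal d) * Dhi) * P := by
          rw [hDhiM, hMtDhi]; simp only [Matrix.mul_assoc]
      _ = P * (A - 1) * P := by rw [hmid]
  -- key closed form S = (A - 1) - U Γk Uᵀ
  have hAsym : Aᵀ = A := by
    rw [hA]
    simp [Matrix.transpose_mul, hDhit, hVy, Matrix.mul_assoc]
  have hBsym : (A - 1)ᵀ = A - 1 := by rw [Matrix.transpose_sub, hAsym, Matrix.transpose_one]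
  have hdiagsub : Matrix.diagonal (fun j : Fin k => 1 + γ (Fin.castLE hkT.le j)) - 1 = Γk := by
    rw [hΓkdef, ← Matrix.diagonal_one, Matrix.diagonal_sub,
      diag_congr (n := k) (f := fun j : Fin k => 1 + γ (Fin.castLE hkT.le j) - 1) (fun j => by ring)]
  have hBQ : (A - 1) * Q = U * Γk * Uᵀ := by
    rw [hQdef, Matrix.sub_mul, Matrix.one_mul, ← Matrix.mul_assoc, hAU, ← Matrix.sub_mul]
    rw [show U * Matrix.diagonal (fun j : Fin k => 1 + γ (Fin.castLE hkT.le j)) - U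
        = U * Γk by rw [← hdiagsub, Matrix.mul_sub, Matrix.mul_one]]
  have hQB : Q * (A - 1) = U * Γk * Uᵀ := by
    have h1 : Q * (A - 1) = ((A - 1)ᵀ * Qᵀ)ᵀ := by
      rw [Matrix.transpose_mul, Matrix.transpose_transpose, Matrix.transpose_transpose]
    rw [h1, hBsym, hQsym, hBQ]
    rw [Matrix.transpose_mul, Matrix.transpose_mul, Matrix.transpose_transpose, hΓkt]
    simp only [Matrix.mul_assoc]
  set R : Matrix (Fin T) (Fin T) ℝ := U * Γk * Uᵀ with hRdef
  have hRQ : R * Q = R := by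
    rw [hRdef, hQdef]
    calc U * Γk * Uᵀ * (U * Uᵀ) = U * Γk * ((Uᵀ * U) * Uᵀ) := by simp only [Matrix.mul_assoc]
      _ = U * Γk * Uᵀ := by rw [hUorth, Matrix.one_mul]
  have hSfin : S = (A - 1) - R := by
    rw [hS2, hPdef, Matrix.sub_mul, Matrix.one_mul, hQB, Matrix.mul_sub, Matrix.mul_one,
      Matrix.sub_mul, hBQ, hRQ]
    abel
  -- symmetry
  have hRsym : Rᵀ = R := by
    rw [hRdef, Matrix.transpose_mul, Matrix.transpose_mul, Matrix.transpose_transpose, hΓkt]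
    simp only [Matrix.mul_assoc]
  have hSsym : Sᵀ = S := by
    rw [hSfin, Matrix.transpose_sub, hBsym, hRsym]
  refine ⟨hSsym, ?_⟩
  -- charpoly via evaluation
  have hTne : (Finset.univ : Finset (Fin T)).Nonempty := ⟨⟨0, by omega⟩, Finset.mem_univ _⟩
  set b : ℝ := max 0 (Finset.univ.sup' hTne γ) with hbdef
  apply Polynomial.eq_of_infinite_eval_eq
  apply Set.Infinite.mono (s := Set.Ioi b)
  swap
  · exact Set.Ioi_infinite b
  intro x hx
  have hx0 : 0 < x := lt_of_le_of_lt (le_max_left _ _) hx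
  have hxγ : ∀ j : Fin T, γ j < x := by
    intro j
    exact lt_of_le_of_lt (le_trans (Finset.le_sup' γ (Finset.mem_univ j)) (le_max_right _ _)) hx
  have hxγne : ∀ j : Fin T, x - γ j ≠ 0 := fun j => sub_ne_zero_of_ne (hxγ j).ne'
  show Polynomial.eval x S.charpoly = _
  -- W and its determinant
  set W : Matrix (Fin T) (Fin T) ℝ := Matrix.diagonal (fun _ => x) - (A - 1) with hWdef
  have hW1 : W = Matrix.diagonal (fun _ : Fin T => x + 1) - A := by
    rw [hWdef, show Matrix.diagonal (fun _ : Fin T => x + 1)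
        = Matrix.diagonal (fun _ : Fin T => x) + 1 by
      rw [← Matrix.diagonal_one, ← Matrix.diagonal_add]]
    abel
  have hdetW : W.det = ∏ j : Fin T, (x - γ j) := by
    rw [hW1, ← eval_charpoly_aux, heig]
    rw [Polynomial.eval_prod]
    refine Finset.prod_congr rfl fun j _ => ?_
    simp; ring
  have hdetWne : W.det ≠ 0 := by
    rw [hdetW]
    exact Finset.prod_ne_zero_iff.mpr fun j _ => hxγne j
  have hWU : W * U = U * Matrix.diagonal (fun j : Fin k => x - γ (Fin.castLE hkT.le j)) := by
    have hxU : Matrix.diagonal (fun _ : Fin T => x) * U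
        = U * Matrix.diagonal (fun _ : Fin k => x) := by
      ext t j
      rw [Matrix.diagonal_mul, Matrix.mul_diagonal, mul_comm]
    have hdiag2 : (Matrix.diagonal fun _ : Fin k => x) -
        (Matrix.diagonal (fun j : Fin k => 1 + γ (Fin.castLE hkT.le j)) - 1)
        = Matrix.diagonal (fun j : Fin k => x - γ (Fin.castLE hkT.le j)) := by
      ext i j
      by_cases h : i = j
      · subst h
        simp only [Matrix.sub_apply, Matrix.diagonal_apply_eq, Matrix.one_apply_eq]
        ring
      · simp [Matrix.sub_apply, Matrix.diagonal_apply_ne _ h, Matrix.one_apply_ne h]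
    rw [hWdef, Matrix.sub_mul, Matrix.sub_mul, Matrix.one_mul, hxU, hAU, ← hdiag2,
      Matrix.mul_sub, Matrix.mul_sub, Matrix.mul_one]
  have hWunit : IsUnit W.det := isUnit_iff_ne_zero.mpr hdetWne
  have hWinvU : W⁻¹ * U
      = U * Matrix.diagonal (fun j : Fin k => (x - γ (Fin.castLE hkT.le j))⁻¹) := by
    have h1 : W * (U * Matrix.diagonal (fun j : Fin k => (x - γ (Fin.castLE hkT.le j))⁻¹))
        = U := by
      rw [← Matrix.mul_assoc, hWU, Matrix.mul_assoc, Matrix.diagonal_mul_diagonal]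
      rw [show (Matrix.diagonal fun j : Fin k =>
          (x - γ (Fin.castLE hkT.le j)) * (x - γ (Fin.castLE hkT.le j))⁻¹) = 1 by
        rw [diag_congr (n := k) (fun j => mul_inv_cancel₀ (hxγne _)), Matrix.diagonal_one]]
      rw [Matrix.mul_one]
    calc W⁻¹ * U = W⁻¹ * (W * (U * Matrix.diagonal
          (fun j : Fin k => (x - γ (Fin.castLE hkT.le j))⁻¹))) := by rw [h1]
      _ = (W⁻¹ * W) * (U * Matrix.diagonal
          (fun j : Fin k => (x - γ (Fin.castLE hkT.le j))⁻¹)) := by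
          simp only [Matrix.mul_assoc]
      _ = _ := by rw [Matrix.nonsing_inv_mul W hWunit, Matrix.one_mul]
  -- main determinant computation
  have hexpand : Matrix.diagonal (fun _ : Fin T => x) - S = W * (1 + (W⁻¹ * U * Γk) * Uᵀ) := by
    rw [hSfin, Matrix.mul_add, Matrix.mul_one]
    have h2 : W * ((W⁻¹ * U * Γk) * Uᵀ) = R := by
      calc W * ((W⁻¹ * U * Γk) * Uᵀ) = (W * W⁻¹) * (U * (Γk * Uᵀ)) := by
            simp only [Matrix.mul_assoc]
        _ = U * (Γk * Uᵀ) := by rw [Matrix.mul_nonsing_inv W hWunit, Matrix.one_mul]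
        _ = R := by rw [hRdef]; simp only [Matrix.mul_assoc]
    rw [h2, hWdef]
    abel
  have hinner : Uᵀ * (W⁻¹ * U * Γk)
      = Matrix.diagonal (fun j : Fin k =>
          (x - γ (Fin.castLE hkT.le j))⁻¹ * γ (Fin.castLE hkT.le j)) := by
    rw [hWinvU, hΓkdef, Matrix.mul_assoc, Matrix.diagonal_mul_diagonal, ← Matrix.mul_assoc,
      hUorth, Matrix.one_mul]
  have hdet : (Matrix.diagonal (fun _ : Fin T => x) - S).det
      = (∏ j : Fin T, (x - γ j)) *
        ∏ j : Fin k, (1 + (x - γ (Fin.castLE hkT.le j))⁻¹ * γ (Fin.castLE hkT.le j)) := by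
    rw [hexpand, Matrix.det_mul, hdetW, Matrix.det_one_add_mul_comm, hinner]
    congr 1
    rw [show (1 : Matrix (Fin k) (Fin k) ℝ) + Matrix.diagonal (fun j : Fin k =>
        (x - γ (Fin.castLE hkT.le j))⁻¹ * γ (Fin.castLE hkT.le j))
      = Matrix.diagonal (fun j : Fin k =>
        1 + (x - γ (Fin.castLE hkT.le j))⁻¹ * γ (Fin.castLE hkT.le j)) by
      rw [← Matrix.diagonal_one, ← Matrix.diagonal_add]]
    rw [Matrix.det_diagonal]
  -- put everything together
  rw [eval_charpoly_aux, hdet]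
  rw [Polynomial.eval_mul, Polynomial.eval_pow, Polynomial.eval_X, Polynomial.eval_prod]
  simp only [Polynomial.eval_sub, Polynomial.eval_X, Polynomial.eval_C]
  rw [← Finset.prod_filter_mul_prod_filter_not Finset.univ (fun j : Fin T => (j : ℕ) < k)
    (fun j => x - γ j)]
  have hfilter : (Finset.univ.filter fun j : Fin T => ¬ (j : ℕ) < k)
      = Finset.univ.filter fun j : Fin T => k ≤ (j : ℕ) := by
    congr 1; funext j; simp [not_lt]
  rw [hfilter, prod_filter_lt_aux hkT.le]
  have hxk : (∏ j : Fin k, (x - γ (Fin.castLE hkT.le j))) *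
      ∏ j : Fin k, (1 + (x - γ (Fin.castLE hkT.le j))⁻¹ * γ (Fin.castLE hkT.le j)) = x ^ k := by
    rw [← Finset.prod_mul_distrib]
    rw [show x ^ k = ∏ _j : Fin k, x by simp]
    refine Finset.prod_congr rfl fun j _ => ?_
    have h := hxγne (Fin.castLE hkT.le j)
    field_simp
    ring
  rw [← hxk]
  ring
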